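/- Let f : Z_p^n → Z_p be an injective continuous function. Then there exists δ > 0 such that for every continuous function g : Z_p^n → Q_p which is constant in some direction on some ball of radius 1/p in Z_p^n, one has ∫_{Z_p^n} |f(x) − g(x)| dμ(x) ≥ δ, where μ is the Haar probability measure on Z_p^n. -/

import Mathlib

open MeasureTheory

theorem injective_far_from_directionally_constant (p : ℕ) [Fact p.Prime] (n : ℕ)
    [MeasurableSpace (Fin n → ℤ_[p])] [BorelSpace (Fin n → ℤ_[p])]
    (μ : Measure (Fin n → ℤ_[p])) [IsProbabilityMeasure μ]
    (hinv : ∀ a : Fin n → ℤ_[p], μ.map (· + a) = μ)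
    (f : (Fin n → ℤ_[p]) → ℤ_[p])
    (hcont : Continuous f) (hinj : Function.Injective f) :
    ∃ δ : ℝ, 0 < δ ∧ ∀ g : (Fin n → ℤ_[p]) → ℚ_[p], Continuous g →
      (∃ (v h : Fin n → ℤ_[p]), ‖h‖ = (p : ℝ)⁻¹ ∧
        ∀ x : Fin n → ℤ_[p], ‖x - v‖ ≤ (p : ℝ)⁻¹ → g (x + h) = g x) →
      δ ≤ ∫ x, ‖(f x : ℚ_[p]) - g x‖ ∂μ := by
  classical
  have hp1 : (0:ℝ) < (p:ℝ)⁻¹ := by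
    have : (0:ℝ) < (p:ℝ) := by exact_mod_cast (Fact.out : p.Prime).pos
    positivity
  -- ultrametric inequality for the sup norm on (Fin n → ℤ_[p])
  have hultra : ∀ a b : (Fin n → ℤ_[p]), ‖a + b‖ ≤ max ‖a‖ ‖b‖ := by
    intro a b
    rcases n.eq_zero_or_pos with hn | hn
    · have : a + b = 0 := by funext i; exact absurd i.2 (by omega)
      simp [this, le_max_iff, norm_nonneg]
    · have hmax : (0:ℝ) ≤ max ‖a‖ ‖b‖ := le_max_of_le_left (norm_nonneg _)
      rw [pi_norm_le_iff_of_nonneg hmax]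
      intro i
      refine (IsUltrametricDist.norm_add_le_max (a i) (b i)).trans ?_
      exact max_le_max (norm_le_pi_norm a i) (norm_le_pi_norm b i)
  by_cases hS : ∃ h : (Fin n → ℤ_[p]), ‖h‖ = (p:ℝ)⁻¹
  · -- the map to Q_p
    set F : (Fin n → ℤ_[p]) → ℚ_[p] := fun x => (f x : ℚ_[p]) with hF
    have hFc : Continuous F := continuous_subtype_val.comp hcont
    -- minimum of ‖F (x+h) - F x‖ over all x and all h of norm 1/p
    set S : Set (Fin n → ℤ_[p]) := {h : (Fin n → ℤ_[p]) | ‖h‖ = (p:ℝ)⁻¹} with hSdef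
    have hScl : IsClosed S := isClosed_eq continuous_norm continuous_const
    have hKc : IsCompact ((Set.univ : Set (Fin n → ℤ_[p])) ×ˢ S) :=
      isCompact_univ.prod hScl.isCompact
    have hKne : ((Set.univ : Set (Fin n → ℤ_[p])) ×ˢ S).Nonempty := ⟨(0, hS.choose), ⟨trivial, hS.choose_spec⟩⟩
    have hφc : Continuous (fun z : (Fin n → ℤ_[p]) × (Fin n → ℤ_[p]) => ‖F (z.1 + z.2) - F z.1‖) := by
      exact ((hFc.comp (continuous_fst.add continuous_snd)).sub (hFc.comp continuous_fst)).norm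
    obtain ⟨z, hzK, hzmin'⟩ := hKc.exists_isMinOn hKne hφc.continuousOn
    rw [isMinOn_iff] at hzmin'
    have hzmin : ∀ w : (Fin n → ℤ_[p]) × (Fin n → ℤ_[p]), w ∈ (Set.univ : Set (Fin n → ℤ_[p])) ×ˢ S →
        ‖F (z.1 + z.2) - F z.1‖ ≤ ‖F (w.1 + w.2) - F w.1‖ := fun w hw => hzmin' w hw
    set ε : ℝ := ‖F (z.1 + z.2) - F z.1‖ with hεdef
    have hε : 0 < ε := by
      rw [hεdef, norm_pos_iff, sub_ne_zero]
      intro hcontra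
      have heq : z.1 + z.2 = z.1 := hinj (Subtype.coe_injective hcontra)
      have hz2 : z.2 = 0 := by
        have := congrArg (fun w => w - z.1) heq
        simpa using this
      have := hzK.2
      rw [hSdef] at this
      simp only [Set.mem_setOf_eq, hz2, norm_zero] at this
      exact absurd this.symm (ne_of_gt hp1)
    -- the small ball at 0 and its measure
    set B₀ : Set (Fin n → ℤ_[p]) := {x : (Fin n → ℤ_[p]) | ‖x‖ ≤ (p:ℝ)⁻¹} with hB₀def
    have hB₀cl : IsClosed B₀ := isClosed_le continuous_norm continuous_const
    have hB₀meas : MeasurableSet B₀ := hB₀cl.measurableSet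
    have hB₀open : IsOpen B₀ := by
      have : B₀ = {x : (Fin n → ℤ_[p]) | ‖x‖ < 1} := by
        ext x
        simp only [hB₀def, Set.mem_setOf_eq]
        constructor
        · intro hx
          refine lt_of_le_of_lt hx ?_
          rw [inv_lt_one_iff₀]
          right
          exact_mod_cast (Fact.out : p.Prime).one_lt
        · intro hx
          rw [pi_norm_le_iff_of_nonneg (le_of_lt hp1)]
          intro i
          have hxi : ‖x i‖ < 1 := lt_of_le_of_lt (norm_le_pi_norm x i) hx
          have := (PadicInt.norm_lt_one_iff_dvd (x i)).mp hxi
          obtain ⟨c, hc⟩ := this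
          rw [hc]
          calc ‖(p:ℤ_[p]) * c‖ = ‖(p:ℤ_[p])‖ * ‖c‖ := norm_mul _ _
            _ ≤ ‖(p:ℤ_[p])‖ * 1 := by
                exact mul_le_mul_of_nonneg_left (PadicInt.norm_le_one c) (norm_nonneg _)
            _ = (p:ℝ)⁻¹ := by rw [mul_one, PadicInt.norm_p]
      rw [this]
      exact isOpen_lt continuous_norm continuous_const
    -- translation invariance of measures of translates
    have hmeasadd : ∀ a : (Fin n → ℤ_[p]), Measurable (fun x : (Fin n → ℤ_[p]) => x + a) :=
      fun a => (continuous_id.add continuous_const).measurable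
    have htrans : ∀ a : (Fin n → ℤ_[p]), μ ((fun x => x + a) ⁻¹' B₀) = μ B₀ := by
      intro a
      conv_rhs => rw [← hinv a]
      rw [Measure.map_apply (hmeasadd a) hB₀meas]
    -- μ B₀ is positive
    have hμB₀ : μ B₀ ≠ 0 := by
      intro hzero
      have hcover : (Set.univ : Set (Fin n → ℤ_[p])) ⊆ ⋃ a : (Fin n → ℤ_[p]), (fun x => x + a) ⁻¹' B₀ := by
        intro x _
        refine Set.mem_iUnion.mpr ⟨-x, ?_⟩
        simp [hB₀def, le_of_lt hp1]
      obtain ⟨t, ht⟩ := isCompact_univ.elim_finite_subcover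
        (fun a : (Fin n → ℤ_[p]) => (fun x => x + a) ⁻¹' B₀)
        (fun a => hB₀open.preimage (continuous_id.add continuous_const)) hcover
      have h1 : (1 : ENNReal) = μ Set.univ := (measure_univ).symm
      have h2 : μ Set.univ ≤ ∑ a ∈ t, μ ((fun x => x + a) ⁻¹' B₀) :=
        (measure_mono ht).trans (measure_biUnion_finset_le t _)
      rw [← h1] at h2
      simp only [htrans, hzero, Finset.sum_const_zero] at h2
      exact absurd h2 (by norm_num)
    set m : ℝ := (μ B₀).toReal with hmdef
    have hm : 0 < m := ENNReal.toReal_pos hμB₀ (measure_ne_top μ B₀)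
    refine ⟨ε * m / 2, by positivity, ?_⟩
    rintro g hg ⟨v, h, hhnorm, hgh⟩
    -- the ball B
    set B : Set (Fin n → ℤ_[p]) := {x : (Fin n → ℤ_[p]) | ‖x - v‖ ≤ (p:ℝ)⁻¹} with hBdef
    have hBmeas : MeasurableSet B :=
      (isClosed_le ((continuous_id.sub continuous_const).norm) continuous_const).measurableSet
    have hμB : μ B = μ B₀ := by
      have : B = (fun x => x + (-v)) ⁻¹' B₀ := by
        ext x; simp [hBdef, hB₀def, sub_eq_add_neg]
      rw [this, htrans]
    -- h has norm ≤ 1/p, so translation by h maps B to B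
    have hhle : ‖h‖ ≤ (p:ℝ)⁻¹ := le_of_eq hhnorm
    have hBinv : (fun x => x + h) ⁻¹' B = B := by
      ext x
      simp only [Set.mem_preimage, hBdef, Set.mem_setOf_eq]
      constructor
      · intro hx
        have : x - v = (x + h - v) + (-h) := by ring
        rw [this]
        refine (hultra _ _).trans (max_le hx ?_)
        rwa [norm_neg]
      · intro hx
        have : x + h - v = (x - v) + h := by ring
        rw [this]
        exact (hultra _ _).trans (max_le hx hhle)
    -- integrability
    have hGc : Continuous (fun x => ‖F x - g x‖) := (hFc.sub hg).norm
    have hGint : Integrable (fun x => ‖F x - g x‖) μ :=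
      hGc.integrable_of_hasCompactSupport (HasCompactSupport.of_compactSpace _)
    have hGTc : Continuous (fun x => ‖F (x + h) - g (x + h)‖) :=
      hGc.comp (continuous_id.add continuous_const)
    have hGTint : Integrable (fun x => ‖F (x + h) - g (x + h)‖) μ :=
      hGTc.integrable_of_hasCompactSupport (HasCompactSupport.of_compactSpace _)
    have hDc : Continuous (fun x => ‖F (x + h) - F x‖) :=
      ((hFc.comp (continuous_id.add continuous_const)).sub hFc).norm
    have hDint : Integrable (fun x => ‖F (x + h) - F x‖) μ :=
      hDc.integrable_of_hasCompactSupport (HasCompactSupport.of_compactSpace _)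
    -- step 1 : ε * m ≤ ∫_B ‖F(x+h) - F x‖
    have step1 : ε * m ≤ ∫ x in B, ‖F (x + h) - F x‖ ∂μ := by
      have hconst : ∫ _x in B, ε ∂μ = (μ B).toReal * ε := by
        rw [setIntegral_const, smul_eq_mul, Measure.real_def]
      have hmono : ∫ _x in B, ε ∂μ ≤ ∫ x in B, ‖F (x + h) - F x‖ ∂μ := by
        refine setIntegral_mono_on ((integrableOn_const_iff (C := ε)).mpr ?_) hDint.integrableOn hBmeas ?_
        · right; exact lt_of_le_of_lt (measure_mono (Set.subset_univ _)) (by simp)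
        · intro x _
          exact hzmin (x, h) ⟨trivial, hhnorm⟩
      calc ε * m = (μ B).toReal * ε := by rw [hμB, ← hmdef, mul_comm]
        _ = ∫ _x in B, ε ∂μ := hconst.symm
        _ ≤ _ := hmono
    -- step 2 : pointwise bound on B
    have step2 : ∫ x in B, ‖F (x + h) - F x‖ ∂μ ≤
        ∫ x in B, (‖F x - g x‖ + ‖F (x + h) - g (x + h)‖) ∂μ := by
      refine setIntegral_mono_on hDint.integrableOn
        (hGint.integrableOn.add hGTint.integrableOn) hBmeas ?_
      intro x hx
      have hgx : g (x + h) = g x := hgh x hx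
      have : F (x + h) - F x = (F (x + h) - g (x + h)) - (F x - g x) := by
        rw [hgx]; ring
      rw [this]
      refine (norm_sub_le _ _).trans ?_
      rw [add_comm]
    -- step 3 : change of variables
    have step3 : ∫ x in B, ‖F (x + h) - g (x + h)‖ ∂μ = ∫ x in B, ‖F x - g x‖ ∂μ := by
      have hmp : MeasurePreserving (fun x : (Fin n → ℤ_[p]) => x + h) μ μ := ⟨hmeasadd h, hinv h⟩
      have hemb : MeasurableEmbedding (fun x : (Fin n → ℤ_[p]) => x + h) :=
        (Homeomorph.addRight h).measurableEmbedding
      have := hmp.setIntegral_preimage_emb hemb (fun x => ‖F x - g x‖) B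
      rw [hBinv] at this
      exact this
    -- step 4 : splitting the integral
    have step4 : ∫ x in B, (‖F x - g x‖ + ‖F (x + h) - g (x + h)‖) ∂μ =
        (∫ x in B, ‖F x - g x‖ ∂μ) + ∫ x in B, ‖F (x + h) - g (x + h)‖ ∂μ :=
      integral_add hGint.integrableOn hGTint.integrableOn
    -- step 5 : restrict vs full integral
    have step5 : ∫ x in B, ‖F x - g x‖ ∂μ ≤ ∫ x, ‖F x - g x‖ ∂μ :=
      setIntegral_le_integral hGint (Filter.Eventually.of_forall fun x => norm_nonneg _)
    have : ε * m ≤ 2 * ∫ x, ‖F x - g x‖ ∂μ := by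
      calc ε * m ≤ ∫ x in B, ‖F (x + h) - F x‖ ∂μ := step1
        _ ≤ ∫ x in B, (‖F x - g x‖ + ‖F (x + h) - g (x + h)‖) ∂μ := step2
        _ = (∫ x in B, ‖F x - g x‖ ∂μ) + ∫ x in B, ‖F (x + h) - g (x + h)‖ ∂μ := step4
        _ = 2 * ∫ x in B, ‖F x - g x‖ ∂μ := by rw [step3]; ring
        _ ≤ 2 * ∫ x, ‖F x - g x‖ ∂μ := by linarith [step5]
    linarith [this]
  · exact ⟨1, one_pos, fun g hg hex => absurd ⟨hex.choose_spec.choose,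
      hex.choose_spec.choose_spec.1⟩ hS⟩
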